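/- Let G be a continuous self-map of a compact metric space Q and let (X_n)_{n≥1} be a sequence of periodic orbits of G with strictly increasing periods π(X_n); let μ_n be the uniform atomic probability measure on X_n. Assume that for every ε > 0 and every m ∈ ℕ there exists a subset X̃_{m,ε} ⊆ X_m such that for every continuous function φ : Q → ℝ there exists N = N(ε,φ) ∈ ℕ such that for all m > N: (1) #X̃_{m,ε}/#X_m > 1 − ε; and (2) for every n with N ≤ n < m and every x ∈ X̃_{m,ε}, |∫ φ dν_{π(X_n)}(x) − ∫ φ dμ_n| < ε. Then the sequence (μ_n) converges in the weak-* topology, and the limit measure is an ergodic G-invariant Borel probability measure. -/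

import Mathlib

open MeasureTheory Filter Metric Topology Set BoundedContinuousFunction
open scoped ENNReal NNReal

/-- The uniform atomic probability measure on a finite set `X`:
`μ_X = (1/#X) ∑_{x ∈ X} δ_x`. -/
noncomputable def unifOrbit {Q : Type*} [MeasurableSpace Q] (X : Finset Q) :
    Measure Q := ((X.card : ℝ≥0∞))⁻¹ • ∑ x ∈ X, Measure.dirac x

/-- The `k`-measure of a point `x`: `ν_k(x) = (1/k) ∑_{i=0}^{k-1} δ_{G^i(x)}`. -/
noncomputable def nuMeas {Q : Type*} [MeasurableSpace Q] (G : Q → Q) (k : ℕ) (x : Q) :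
    Measure Q := ((k : ℝ≥0∞))⁻¹ • ∑ i ∈ Finset.range k, Measure.dirac (G^[i] x)

/-- `X` is a periodic orbit of `G`: the orbit of a periodic point, with period `π(X) = #X`. -/
def IsPeriodicOrbit {Q : Type*} (G : Q → Q) (X : Finset Q) : Prop :=
  0 < X.card ∧ ∃ x : Q, G^[X.card] x = x ∧ (X : Set Q) = {y | ∃ i < X.card, G^[i] x = y}

section Helpers
variable {Q : Type*} [MetricSpace Q] [CompactSpace Q] [MeasurableSpace Q] [BorelSpace Q]
variable {G : Q → Q} {X : Finset Q}

lemma integral_smul_sum_dirac (φ : Q → ℝ) (hφ : Continuous φ) {ι : Type*} (s : Finset ι)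
    (p : ι → Q) (c : ℝ≥0∞) :
    ∫ y, φ y ∂((c • ∑ i ∈ s, Measure.dirac (p i) : Measure Q)) = c.toReal * ∑ i ∈ s, φ (p i) := by
  rw [integral_smul_measure, integral_finset_sum_measure, smul_eq_mul]
  · congr 1
    exact Finset.sum_congr rfl fun i _ => integral_dirac φ (p i)
  · intro i _
    exact (BoundedContinuousFunction.mkOfCompact ⟨φ, hφ⟩).integrable _

lemma integral_unifOrbit (φ : Q → ℝ) (hφ : Continuous φ) (X : Finset Q) :
    ∫ y, φ y ∂(unifOrbit X) = ((X.card : ℝ))⁻¹ * ∑ x ∈ X, φ x := by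
  rw [unifOrbit]
  rw [show (∑ x ∈ X, Measure.dirac x) = ∑ x ∈ X, Measure.dirac (id x) from rfl,
    integral_smul_sum_dirac φ hφ X id]
  simp [ENNReal.toReal_inv]

lemma integral_nuMeas (φ : Q → ℝ) (hφ : Continuous φ) (G : Q → Q) (k : ℕ) (x : Q) :
    ∫ y, φ y ∂(nuMeas G k x) = ((k : ℝ))⁻¹ * ∑ i ∈ Finset.range k, φ (G^[i] x) := by
  rw [nuMeas, integral_smul_sum_dirac φ hφ (Finset.range k) (fun i => G^[i] x)]
  simp [ENNReal.toReal_inv]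

omit [MetricSpace Q] [CompactSpace Q] [BorelSpace Q] in
lemma unifOrbit_prob {X : Finset Q} (h : 0 < X.card) : IsProbabilityMeasure (unifOrbit X) := by
  constructor
  rw [unifOrbit, Measure.smul_apply, Measure.finset_sum_apply]
  simp only [Measure.dirac_apply_of_mem (Set.mem_univ _), Finset.sum_const, nsmul_eq_mul, mul_one,
    smul_eq_mul]
  exact ENNReal.inv_mul_cancel (by exact_mod_cast h.ne') (ENNReal.natCast_ne_top _)

omit [MetricSpace Q] [CompactSpace Q] [MeasurableSpace Q] [BorelSpace Q] in
lemma orbit_sum_comp (hX : IsPeriodicOrbit G X) (f : Q → ℝ) :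
    ∑ x ∈ X, f (G x) = ∑ x ∈ X, f x := by
  obtain ⟨hcard, x0, hx0, hset⟩ := hX
  have hmem : ∀ y, y ∈ X ↔ ∃ i < X.card, G^[i] x0 = y := fun y => by
    rw [← Finset.mem_coe, hset]; rfl
  have horb : ∀ j, G^[j] x0 ∈ X := by
    intro j
    have h1 : G^[j] x0 = G^[j % X.card] x0 := by
      conv_lhs => rw [← Nat.div_add_mod j X.card, add_comm]
      rw [Function.iterate_add_apply, Function.iterate_mul,
        Function.iterate_fixed hx0 (j / X.card)]
    rw [h1]
    exact (hmem _).2 ⟨_, Nat.mod_lt _ hcard, rfl⟩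
  have hfix : ∀ y ∈ X, G^[X.card] y = y := by
    intro y hy
    obtain ⟨i, hi, rfl⟩ := (hmem y).1 hy
    rw [← Function.iterate_add_apply, add_comm, Function.iterate_add_apply, hx0]
  have hGmem : ∀ y ∈ X, G y ∈ X := by
    intro y hy
    obtain ⟨i, hi, rfl⟩ := (hmem y).1 hy
    rw [← Function.iterate_succ_apply' G i x0]
    exact horb _
  have hhmem : ∀ y ∈ X, G^[X.card - 1] y ∈ X := by
    intro y hy
    obtain ⟨i, hi, rfl⟩ := (hmem y).1 hy
    rw [← Function.iterate_add_apply]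
    exact horb _
  have hgh : ∀ y ∈ X, G (G^[X.card - 1] y) = y := by
    intro y hy
    have h2 : G (G^[X.card - 1] y) = G^[X.card - 1 + 1] y :=
      (Function.iterate_succ_apply' G (X.card - 1) y).symm
    rw [h2, Nat.sub_add_cancel hcard]
    exact hfix y hy
  have hhg : ∀ y ∈ X, G^[X.card - 1] (G y) = y := by
    intro y hy
    have h2 : G^[X.card - 1] (G y) = G^[X.card - 1 + 1] y :=
      (Function.iterate_succ_apply G (X.card - 1) y).symm
    rw [h2, Nat.sub_add_cancel hcard]
    exact hfix y hy
  exact Finset.sum_nbij' (fun y => G y) (fun y => G^[X.card - 1] y)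
    (fun a ha => hGmem a ha) (fun a ha => hhmem a ha) hhg hgh (fun a _ => rfl)

omit [MetricSpace Q] [CompactSpace Q] [MeasurableSpace Q] [BorelSpace Q] in
lemma orbit_sum_iterate (hX : IsPeriodicOrbit G X) (f : Q → ℝ) (i : ℕ) :
    ∑ x ∈ X, f (G^[i] x) = ∑ x ∈ X, f x := by
  induction i with
  | zero => simp
  | succ n ih =>
    calc ∑ x ∈ X, f (G^[n + 1] x) = ∑ x ∈ X, (fun y => f (G^[n] y)) (G x) := by
          simp [Function.iterate_succ_apply]
    _ = ∑ x ∈ X, f (G^[n] x) := orbit_sum_comp hX (fun y => f (G^[n] y))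
    _ = ∑ x ∈ X, f x := ih

lemma sum_nuMeas_integral (hX : IsPeriodicOrbit G X) (φ : Q → ℝ) (hφ : Continuous φ)
    {k : ℕ} (hk : 0 < k) :
    ((X.card : ℝ))⁻¹ * ∑ x ∈ X, (∫ y, φ y ∂(nuMeas G k x)) = ∫ y, φ y ∂(unifOrbit X) := by
  have hk0 : (k : ℝ) ≠ 0 := by exact_mod_cast hk.ne'
  rw [integral_unifOrbit φ hφ]
  have h1 : ∀ x, ∫ y, φ y ∂(nuMeas G k x)
      = ((k : ℝ))⁻¹ * ∑ i ∈ Finset.range k, φ (G^[i] x) := fun x => integral_nuMeas φ hφ G k x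
  simp_rw [h1]
  rw [← Finset.mul_sum, Finset.sum_comm]
  have h2 : ∀ i ∈ Finset.range k, ∑ x ∈ X, φ (G^[i] x) = ∑ x ∈ X, φ x :=
    fun i _ => orbit_sum_iterate hX φ i
  rw [Finset.sum_congr rfl h2, Finset.sum_const, Finset.card_range, nsmul_eq_mul]
  field_simp

lemma abs_integral_nuMeas_le {φ : Q → ℝ} (hφ : Continuous φ) {B : ℝ} (hB : ∀ y, |φ y| ≤ B)
    {k : ℕ} (hk : 0 < k) (x : Q) : |∫ y, φ y ∂(nuMeas G k x)| ≤ B := by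
  have hk0 : (k : ℝ) ≠ 0 := by exact_mod_cast hk.ne'
  have hkpos : (0:ℝ) < k := by exact_mod_cast hk
  rw [integral_nuMeas φ hφ]
  have h1 : |∑ i ∈ Finset.range k, φ (G^[i] x)| ≤ (k : ℝ) * B := by
    refine (Finset.abs_sum_le_sum_abs _ _).trans ?_
    refine (Finset.sum_le_card_nsmul _ _ B (fun i _ => hB _)).trans ?_
    simp [nsmul_eq_mul]
  rw [abs_mul, abs_inv, Nat.abs_cast]
  calc ((k:ℝ))⁻¹ * |∑ i ∈ Finset.range k, φ (G^[i] x)| ≤ ((k:ℝ))⁻¹ * ((k:ℝ) * B) := by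
        exact mul_le_mul_of_nonneg_left h1 (by positivity)
    _ = B := by field_simp

lemma abs_integral_unifOrbit_le {φ : Q → ℝ} (hφ : Continuous φ) {B : ℝ} (hB : ∀ y, |φ y| ≤ B)
    (hX : 0 < X.card) : |∫ y, φ y ∂(unifOrbit X)| ≤ B := by
  have hk0 : ((X.card : ℝ)) ≠ 0 := by exact_mod_cast hX.ne'
  rw [integral_unifOrbit φ hφ]
  have h1 : |∑ x ∈ X, φ x| ≤ (X.card : ℝ) * B := by
    refine (Finset.abs_sum_le_sum_abs _ _).trans ?_
    refine (Finset.sum_le_card_nsmul _ _ B (fun i _ => hB _)).trans ?_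
    simp [nsmul_eq_mul]
  rw [abs_mul, abs_inv, Nat.abs_cast]
  calc ((X.card:ℝ))⁻¹ * |∑ x ∈ X, φ x| ≤ ((X.card:ℝ))⁻¹ * ((X.card:ℝ) * B) := by
        exact mul_le_mul_of_nonneg_left h1 (by positivity)
    _ = B := by field_simp

end Helpers

lemma avg_abs_est {Q : Type*} [DecidableEq Q] {X Xt : Finset Q} (hsub : Xt ⊆ X) (hX : 0 < X.card)
    (A : Q → ℝ) (c B δ ε : ℝ) (hε : 0 ≤ ε) (hB : 0 ≤ B)
    (hBd : ∀ x ∈ X, |A x - c| ≤ B)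
    (hδ : 1 - δ < (Xt.card : ℝ) / (X.card : ℝ))
    (hA : ∀ x ∈ Xt, |A x - c| ≤ ε) :
    ((X.card : ℝ))⁻¹ * ∑ x ∈ X, |A x - c| ≤ ε + δ * B := by
  have hXpos : (0 : ℝ) < X.card := by exact_mod_cast hX
  have hdiff : ((X.card : ℝ) - Xt.card) ≤ δ * X.card := by
    have h1 : (1 - δ) * X.card < Xt.card := (lt_div_iff₀ hXpos).1 hδ
    nlinarith
  have hsum : ∑ x ∈ X, |A x - c| ≤ (Xt.card : ℝ) * ε + ((X.card : ℝ) - Xt.card) * B := by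
    rw [← Finset.sum_sdiff hsub]
    have h2 : ∑ x ∈ X \ Xt, |A x - c| ≤ ((X \ Xt).card : ℝ) * B :=
      Finset.sum_le_card_nsmul _ _ _ (fun x hx => hBd x (Finset.mem_sdiff.1 hx).1) |>.trans
        (by simp [nsmul_eq_mul])
    have h3 : ∑ x ∈ Xt, |A x - c| ≤ (Xt.card : ℝ) * ε :=
      Finset.sum_le_card_nsmul _ _ _ hA |>.trans (by simp [nsmul_eq_mul])
    have h4 : ((X \ Xt).card : ℝ) = (X.card : ℝ) - Xt.card := by
      rw [Finset.card_sdiff_of_subset hsub]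
      have := Finset.card_le_card hsub
      push_cast [Nat.cast_sub this]
      ring
    rw [h4] at h2
    linarith
  rw [inv_mul_le_iff₀ hXpos]
  have hXtle : (Xt.card : ℝ) ≤ X.card := by exact_mod_cast Finset.card_le_card hsub
  calc ∑ x ∈ X, |A x - c| ≤ (Xt.card : ℝ) * ε + ((X.card : ℝ) - Xt.card) * B := hsum
    _ ≤ (X.card : ℝ) * ε + (δ * X.card) * B := by nlinarith
    _ = (X.card : ℝ) * (ε + δ * B) := by ring


noncomputable def toRealBCF {Q : Type*} [TopologicalSpace Q] [CompactSpace Q]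
    (f : Q →ᵇ ℝ≥0) : Q →ᵇ ℝ :=
  BoundedContinuousFunction.mkOfCompact ⟨fun x => (f x : ℝ), NNReal.continuous_coe.comp f.continuous⟩

@[simp] lemma toRealBCF_apply {Q : Type*} [TopologicalSpace Q] [CompactSpace Q]
    (f : Q →ᵇ ℝ≥0) (x : Q) : toRealBCF f x = (f x : ℝ) := rfl

lemma exists_limit_measure {Q : Type*} [MetricSpace Q] [CompactSpace Q] [MeasurableSpace Q] [BorelSpace Q] (μs : ℕ → Measure Q) (hprob : ∀ n, IsProbabilityMeasure (μs n))
    (L : (Q →ᵇ ℝ) → ℝ)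
    (hL : ∀ f : Q →ᵇ ℝ, Tendsto (fun n => ∫ x, f x ∂(μs n)) atTop (𝓝 (L f))) :
    ∃ μ : Measure Q, IsProbabilityMeasure μ ∧
      ∀ f : Q →ᵇ ℝ, Tendsto (fun n => ∫ x, f x ∂(μs n)) atTop (𝓝 (∫ x, f x ∂μ)) := by
  have := hprob
  -- basic properties of L
  have Lmono : ∀ f g : Q →ᵇ ℝ, (∀ x, f x ≤ g x) → L f ≤ L g := fun f g h =>
    le_of_tendsto_of_tendsto' (hL f) (hL g)
      (fun n => integral_mono (f.integrable _) (g.integrable _) h)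
  have Ladd : ∀ f g : Q →ᵇ ℝ, L (f + g) = L f + L g := by
    intro f g
    refine tendsto_nhds_unique (hL (f + g)) ?_
    have : (fun n => ∫ x, (f + g) x ∂(μs n)) =
        fun n => (∫ x, f x ∂(μs n)) + ∫ x, g x ∂(μs n) := by
      funext n
      simp only [BoundedContinuousFunction.coe_add, Pi.add_apply]
      exact integral_add (f.integrable _) (g.integrable _)
    rw [this]
    exact (hL f).add (hL g)
  have Lsmul : ∀ (a : ℝ) (f : Q →ᵇ ℝ), L (a • f) = a * L f := by
    intro a f
    refine tendsto_nhds_unique (hL (a • f)) ?_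
    have : (fun n => ∫ x, (a • f) x ∂(μs n)) = fun n => a * ∫ x, f x ∂(μs n) := by
      funext n
      simp only [BoundedContinuousFunction.coe_smul, Pi.smul_apply, smul_eq_mul]
      exact integral_const_mul a _
    rw [this]
    exact (hL f).const_mul a
  have Lone : L 1 = 1 := by
    refine tendsto_nhds_unique (hL 1) ?_
    have : (fun n => ∫ x, (1 : Q →ᵇ ℝ) x ∂(μs n)) = fun _ => (1 : ℝ) := by
      funext n
      simp
    rw [this]
    exact tendsto_const_nhds
  have Lnonneg : ∀ f : Q →ᵇ ℝ, (∀ x, 0 ≤ f x) → 0 ≤ L f := fun f h =>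
    ge_of_tendsto' (hL f) (fun n => integral_nonneg h)
  -- the NNReal-linear functional
  have hadd : ∀ f g : Q →ᵇ ℝ≥0, toRealBCF (f + g) = toRealBCF f + toRealBCF g := by
    intro f g; ext x; simp
  have Λnn : ∀ f : Q →ᵇ ℝ≥0, 0 ≤ L (toRealBCF f) := fun f =>
    Lnonneg _ (fun x => (f x).2)
  let Λ : (Q →ᵇ ℝ≥0) →ₗ[ℝ≥0] ℝ≥0 :=
    { toFun := fun f => (L (toRealBCF f)).toNNReal
      map_add' := by
        intro f g
        show (L (toRealBCF (f + g))).toNNReal =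
          (L (toRealBCF f)).toNNReal + (L (toRealBCF g)).toNNReal
        rw [hadd, Ladd]
        exact Real.toNNReal_add (Λnn f) (Λnn g)
      map_smul' := by
        intro c f
        have h1 : toRealBCF (c • f) = (c : ℝ) • toRealBCF f := by
          ext x; simp [NNReal.smul_def]
        show (L (toRealBCF (c • f))).toNNReal = (RingHom.id ℝ≥0) c • (L (toRealBCF f)).toNNReal
        rw [h1, Lsmul]
        simp only [RingHom.id_apply]
        rw [Real.toNNReal_mul c.coe_nonneg, Real.toNNReal_coe]
        rfl }
  have ΛofL : ∀ f : Q →ᵇ ℝ≥0, ((Λ f : ℝ≥0) : ℝ≥0∞) = ENNReal.ofReal (L (toRealBCF f)) := by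
    intro f; rfl
  have Λone : Λ (1 : Q →ᵇ ℝ≥0) = 1 := by
    have h1 : toRealBCF (1 : Q →ᵇ ℝ≥0) = 1 := by ext x; simp
    show (L (toRealBCF 1)).toNNReal = 1
    rw [h1, Lone, Real.toNNReal_one]
  let toBCF : CompactlySupportedContinuousMap Q ℝ≥0 → (Q →ᵇ ℝ≥0) := fun f =>
    BoundedContinuousFunction.mkOfCompact f.toContinuousMap
  let ofBCF : (Q →ᵇ ℝ≥0) → CompactlySupportedContinuousMap Q ℝ≥0 := fun f =>
    CompactlySupportedContinuousMap.continuousMapEquiv f.toContinuousMap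
  let Λ' : CompactlySupportedContinuousMap Q ℝ≥0 →ₗ[ℝ≥0] ℝ≥0 :=
    { toFun := fun f => Λ (toBCF f)
      map_add' := fun f g => by
        rw [← map_add]; rfl
      map_smul' := fun c f => by
        rw [← map_smul]; rfl }
  -- the content
  let C : Content Q :=
    { toFun := rieszContentAux Λ'
      mono' := fun K₁ K₂ h => rieszContentAux_mono Λ' h
      sup_le' := rieszContentAux_sup_le Λ'
      sup_disjoint' := by
        intro K₁ K₂ hdisj _ _
        exact rieszContentAux_union Λ' hdisj }
  let μ0 : Measure Q := C.measure
  have hopen : ∀ (U : Set Q) (hU : IsOpen U), μ0 U = C.innerContent ⟨U, hU⟩ := by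
    intro U hU
    rw [Content.measure_apply _ hU.measurableSet, C.outerMeasure_of_isOpen U hU]
  have hΛmono : ∀ f : Q →ᵇ ℝ≥0, (∀ x, (1 : ℝ≥0) ≤ f x) → (1 : ℝ≥0) ≤ Λ f := by
    intro f hf
    show (1 : ℝ≥0) ≤ (L (toRealBCF f)).toNNReal
    have : L (toRealBCF (1 : Q →ᵇ ℝ≥0)) ≤ L (toRealBCF f) := by
      apply Lmono
      intro x
      simp only [toRealBCF_apply]
      exact_mod_cast hf x
    have h1 : toRealBCF (1 : Q →ᵇ ℝ≥0) = 1 := by ext x; simp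
    rw [h1, Lone] at this
    rw [← Real.toNNReal_one]
    exact Real.toNNReal_mono this
  have hCuniv : rieszContentAux Λ' ⟨univ, isCompact_univ⟩ = 1 := by
    apply le_antisymm
    · have := rieszContentAux_le Λ' (K := ⟨univ, isCompact_univ⟩)
        (f := ofBCF (1 : Q →ᵇ ℝ≥0)) (fun x _ => le_refl 1)
      have hΛ'one : Λ' (ofBCF (1 : Q →ᵇ ℝ≥0)) = 1 := Λone
      rwa [hΛ'one] at this
    · refine le_csInf (rieszContentAux_image_nonempty Λ' _) ?_
      rintro b ⟨f, hf, rfl⟩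
      exact hΛmono (toBCF f) (fun x => hf x (mem_univ x))
  have huniv : μ0 univ = 1 := by
    rw [hopen univ isOpen_univ]
    have h2 : C.innerContent ⟨univ, isOpen_univ⟩ = C ⟨univ, isCompact_univ⟩ :=
      C.innerContent_of_isCompact isCompact_univ isOpen_univ
    rw [h2]
    show ((rieszContentAux Λ' ⟨univ, isCompact_univ⟩ : ℝ≥0) : ℝ≥0∞) = 1
    rw [hCuniv]
    rfl
  have hprobμ0 : IsProbabilityMeasure μ0 := ⟨huniv⟩
  -- the liminf condition for open sets
  have key : ∀ (U : Set Q), IsOpen U → μ0 U ≤ atTop.liminf (fun i => μs i U) := by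
    intro U hU
    rw [hopen U hU]
    refine iSup_le fun K => iSup_le fun hKU => ?_
    obtain ⟨g, hg0, hg1, hg01⟩ := exists_continuous_zero_one_of_isClosed
      hU.isClosed_compl K.isCompact.isClosed
      (Set.disjoint_left.mpr fun x hxc hxK => hxc (hKU hxK))
    let f : Q →ᵇ ℝ≥0 := BoundedContinuousFunction.mkOfCompact
      ⟨fun x => Real.toNNReal (g x), continuous_real_toNNReal.comp g.continuous⟩
    have h1f : ∀ x ∈ (K : Set Q), (1 : ℝ≥0) ≤ f x := by
      intro x hx
      show (1 : ℝ≥0) ≤ Real.toNNReal (g x)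
      rw [hg1 hx]
      norm_num
    have step1 : (C K : ℝ≥0∞) ≤ ENNReal.ofReal (L (toRealBCF f)) := by
      rw [← ΛofL]
      show ((rieszContentAux Λ' K : ℝ≥0) : ℝ≥0∞) ≤ _
      exact ENNReal.coe_le_coe.2 (rieszContentAux_le Λ' (f := ofBCF f) h1f)
    have step2 : ∀ i, ENNReal.ofReal (∫ x, toRealBCF f x ∂(μs i)) ≤ μs i U := by
      intro i
      have hptwise : ∀ x, toRealBCF f x ≤ U.indicator (fun _ => (1 : ℝ)) x := by
        intro x
        by_cases hx : x ∈ U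
        · rw [Set.indicator_of_mem hx]
          show ((Real.toNNReal (g x) : ℝ≥0) : ℝ) ≤ 1
          rw [Real.coe_toNNReal _ (hg01 x).1]
          exact (hg01 x).2
        · rw [Set.indicator_of_notMem hx]
          show ((Real.toNNReal (g x) : ℝ≥0) : ℝ) ≤ 0
          rw [hg0 hx]
          norm_num
      have hle : ∫ x, toRealBCF f x ∂(μs i) ≤ ((μs i) U).toReal := by
        have hint : Integrable (U.indicator (fun _ => (1 : ℝ))) (μs i) :=
          (integrable_const (1 : ℝ)).indicator hU.measurableSet
        calc ∫ x, toRealBCF f x ∂(μs i)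
            ≤ ∫ x, U.indicator (fun _ => (1 : ℝ)) x ∂(μs i) :=
              integral_mono ((toRealBCF f).integrable _) hint hptwise
          _ = ((μs i) U).toReal := by
              rw [integral_indicator_const _ hU.measurableSet]
              simp
              rfl
      calc ENNReal.ofReal (∫ x, toRealBCF f x ∂(μs i))
          ≤ ENNReal.ofReal ((μs i) U).toReal := ENNReal.ofReal_le_ofReal hle
        _ = (μs i) U := ENNReal.ofReal_toReal (measure_ne_top _ _)
    have step3 : ENNReal.ofReal (L (toRealBCF f)) ≤ atTop.liminf (fun i => μs i U) := by
      have hlim : Tendsto (fun i => ENNReal.ofReal (∫ x, toRealBCF f x ∂(μs i))) atTop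
          (𝓝 (ENNReal.ofReal (L (toRealBCF f)))) :=
        (ENNReal.continuous_ofReal.tendsto _).comp (hL (toRealBCF f))
      rw [← hlim.liminf_eq]
      exact liminf_le_liminf (Eventually.of_forall step2)
    exact step1.trans step3
  -- wrap into probability measures and use portmanteau
  let P : ProbabilityMeasure Q := ⟨μ0, hprobμ0⟩
  let Ps : ℕ → ProbabilityMeasure Q := fun i => ⟨μs i, hprob i⟩
  have h_opens' : ∀ (U : Set Q), IsOpen U → P U ≤ atTop.liminf (fun i => Ps i U) := by
    intro U hU
    have aux : ENNReal.ofNNReal (atTop.liminf (fun i => Ps i U)) =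
        atTop.liminf (ENNReal.ofNNReal ∘ fun i => Ps i U) := by
      refine Monotone.map_liminf_of_continuousAt (F := atTop) ENNReal.coe_mono
        (fun i => Ps i U) ?_ ?_ ?_
      · exact ENNReal.continuous_coe.continuousAt
      · refine IsBoundedUnder.isCoboundedUnder_ge ⟨1, ?_⟩
        refine eventually_map.2 (Eventually.of_forall fun i => ?_)
        exact ProbabilityMeasure.apply_le_one (Ps i) U
      · exact ⟨0, by simp⟩
    rw [← ENNReal.coe_le_coe, aux]
    have e1 : (ENNReal.ofNNReal (P U)) = μ0 U :=
      ProbabilityMeasure.ennreal_coeFn_eq_coeFn_toMeasure P U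
    have e2 : (ENNReal.ofNNReal ∘ fun i => Ps i U) = fun i => μs i U := by
      funext i
      exact ProbabilityMeasure.ennreal_coeFn_eq_coeFn_toMeasure (Ps i) U
    rw [e1, e2]
    exact key U hU
  have htend : Tendsto Ps atTop (𝓝 P) := tendsto_of_forall_isOpen_le_liminf h_opens'
  refine ⟨μ0, hprobμ0, ?_⟩
  intro f
  exact ProbabilityMeasure.tendsto_iff_forall_integral_tendsto.1 htend f

/-- Lemma 2.2 (`ergodicitylemma`): if the periodic orbits `X_n` (with increasing periods)
satisfy the two approximation conditions, then the uniform measures `μ_n` on `X_n`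
converge in the weak-* topology, and the limit measure is an ergodic `G`-invariant
Borel probability measure. -/
theorem stmt0 {Q : Type*} [MetricSpace Q] [CompactSpace Q]
    [MeasurableSpace Q] [BorelSpace Q]
    (G : Q → Q) (hG : Continuous G)
    (X : ℕ → Finset Q) (hXper : ∀ n, IsPeriodicOrbit G (X n))
    (hXmono : StrictMono fun n => (X n).card)
    (H : ∀ ε : ℝ, 0 < ε → ∃ Xt : ℕ → Finset Q, (∀ m, Xt m ⊆ X m) ∧
      ∀ φ : C(Q, ℝ), ∃ N : ℕ, ∀ m, N < m →
        (1 - ε < ((Xt m).card : ℝ) / ((X m).card : ℝ)) ∧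
        (∀ n, N ≤ n → n < m → ∀ x ∈ Xt m,
          |(∫ y, φ y ∂(nuMeas G (X n).card x)) - ∫ y, φ y ∂(unifOrbit (X n))| < ε)) :
    ∃ μ : Measure Q, IsProbabilityMeasure μ ∧
      (∀ φ : C(Q, ℝ),
        Tendsto (fun n => ∫ y, φ y ∂(unifOrbit (X n))) atTop (𝓝 (∫ y, φ y ∂μ))) ∧
      Ergodic G μ := by
  classical
  have hcard : ∀ n, 0 < (X n).card := fun n => (hXper n).1
  have hprob : ∀ n, IsProbabilityMeasure (unifOrbit (X n)) := fun n => unifOrbit_prob (hcard n)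
  -- Cauchy property of the integral sequences
  have hcauchy : ∀ f : Q →ᵇ ℝ, CauchySeq (fun n => ∫ y, f y ∂(unifOrbit (X n))) := by
    intro f
    set u : ℕ → ℝ := fun n => ∫ y, f y ∂(unifOrbit (X n)) with hu
    have hBf : (0:ℝ) ≤ ‖f‖ := norm_nonneg f
    have habsf : ∀ y, |f y| ≤ ‖f‖ := fun y => f.norm_coe_le_norm y
    rw [Metric.cauchySeq_iff']
    intro ε hε
    set ε₁ : ℝ := ε / (2 * (1 + 2 * ‖f‖)) with hε₁def
    have hε₁ : 0 < ε₁ := by positivity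
    obtain ⟨Xt, hXtsub, hH⟩ := H ε₁ hε₁
    obtain ⟨N, hN⟩ := hH ⟨⇑f, f.continuous⟩
    refine ⟨N + 1, ?_⟩
    intro n hn
    rcases eq_or_lt_of_le hn with h|h
    · rw [← h]
      simpa [dist_self] using hε
    · obtain ⟨hratio, hnear⟩ := hN n (by omega)
      have hcn : ((X n).card : ℝ) ≠ 0 := by exact_mod_cast (hcard n).ne'
      set A : Q → ℝ := fun x => ∫ y, f y ∂(nuMeas G (X (N+1)).card x) with hA
      have hid : ((X n).card:ℝ)⁻¹ * ∑ x ∈ X n, A x = u n :=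
        sum_nuMeas_integral (hXper n) ⇑f f.continuous (hcard (N+1))
      have heq : ((X n).card:ℝ)⁻¹ * ∑ x ∈ X n, (A x - u (N+1)) = u n - u (N+1) := by
        rw [Finset.sum_sub_distrib, mul_sub, hid, Finset.sum_const, nsmul_eq_mul,
          ← mul_assoc, inv_mul_cancel₀ hcn, one_mul]
      have hBd : ∀ x ∈ X n, |A x - u (N+1)| ≤ 2 * ‖f‖ := by
        intro x _
        have h1 : |A x| ≤ ‖f‖ := abs_integral_nuMeas_le f.continuous habsf (hcard (N+1)) x
        have h2 : |u (N+1)| ≤ ‖f‖ := abs_integral_unifOrbit_le f.continuous habsf (hcard (N+1))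
        have h3 := abs_add_le (A x) (-(u (N+1)))
        rw [abs_neg] at h3
        rw [sub_eq_add_neg]
        linarith
      have hAt : ∀ x ∈ Xt n, |A x - u (N+1)| ≤ ε₁ := by
        intro x hx
        exact (hnear (N+1) (by omega) (by omega) x hx).le
      have habs : |u n - u (N+1)| ≤ ε₁ + ε₁ * (2 * ‖f‖) := by
        rw [← heq]
        have h1 : |((X n).card:ℝ)⁻¹ * ∑ x ∈ X n, (A x - u (N+1))|
            ≤ ((X n).card:ℝ)⁻¹ * ∑ x ∈ X n, |A x - u (N+1)| := by
          rw [abs_mul, abs_inv, Nat.abs_cast]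
          exact mul_le_mul_of_nonneg_left (Finset.abs_sum_le_sum_abs _ _) (by positivity)
        exact h1.trans (avg_abs_est (hXtsub n) (hcard n) A (u (N+1)) (2 * ‖f‖) ε₁ ε₁
          hε₁.le (by positivity) hBd hratio hAt)
      have hfinal : ε₁ + ε₁ * (2 * ‖f‖) < ε := by
        have h2 : ε₁ * (2 * (1 + 2 * ‖f‖)) = ε := div_mul_cancel₀ ε (by positivity)
        nlinarith
      calc dist (u n) (u (N+1)) = |u n - u (N+1)| := Real.dist_eq _ _
        _ ≤ ε₁ + ε₁ * (2 * ‖f‖) := habs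
        _ < ε := hfinal
  have hconv : ∀ f : Q →ᵇ ℝ, ∃ l, Tendsto (fun n => ∫ y, f y ∂(unifOrbit (X n))) atTop (𝓝 l) :=
    fun f => cauchySeq_tendsto_of_complete (hcauchy f)
  choose L hL using hconv
  obtain ⟨μ, hμprob, hμtend⟩ := exists_limit_measure _ hprob L hL
  haveI := hμprob
  -- invariance of μ
  have hinv_n : ∀ (n : ℕ) (f : Q →ᵇ ℝ),
      ∫ y, f (G y) ∂(unifOrbit (X n)) = ∫ y, f y ∂(unifOrbit (X n)) := by
    intro n f
    rw [integral_unifOrbit (fun y => f (G y)) (f.continuous.comp hG),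
      integral_unifOrbit ⇑f f.continuous, orbit_sum_comp (hXper n) ⇑f]
  have hinvμ : ∀ f : Q →ᵇ ℝ, ∫ y, f (G y) ∂μ = ∫ y, f y ∂μ := by
    intro f
    have h1 := hμtend (f.compContinuous ⟨G, hG⟩)
    have h3 : (fun n => ∫ y, (f.compContinuous (⟨G, hG⟩ : C(Q, Q))) y ∂(unifOrbit (X n)))
        = fun n => ∫ y, f y ∂(unifOrbit (X n)) := by
      funext n
      exact hinv_n n f
    rw [h3] at h1
    exact tendsto_nhds_unique h1 (hμtend f)
  haveI hmapinst : IsProbabilityMeasure (μ.map G) :=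
    Measure.isProbabilityMeasure_map hG.measurable.aemeasurable
  have hmap : μ.map G = μ := by
    apply ext_of_forall_lintegral_eq_of_IsFiniteMeasure
    intro f
    rw [lintegral_map (f := fun x => ((f x : ℝ≥0) : ℝ≥0∞))
      ((ENNReal.continuous_coe.comp f.continuous).measurable) hG.measurable]
    have hfG : Integrable (fun a => ((f (G a) : ℝ))) μ :=
      ((toRealBCF f).compContinuous (⟨G, hG⟩ : C(Q, Q))).integrable μ
    rw [lintegral_coe_eq_integral (fun a => f (G a)) hfG,
      lintegral_coe_eq_integral _ ((toRealBCF f).integrable μ)]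
    congr 1
    exact hinvμ (toRealBCF f)
  have hpres : MeasurePreserving G μ μ := ⟨hG.measurable, hmap⟩
  refine ⟨μ, hμprob, ?_, ?_⟩
  · intro φ
    exact hμtend (BoundedContinuousFunction.mkOfCompact φ)
  -- Ergodicity
  refine ⟨hpres, ?_⟩
  constructor
  intro s hs hsinv
  have hs_iter : ∀ i, G^[i] ⁻¹' s = s := by
    intro i
    induction i with
    | zero => simp
    | succ i ih =>
      rw [Function.iterate_succ', Set.preimage_comp, hsinv, ih]
  have hmem_iter : ∀ (i : ℕ) (y : Q), G^[i] y ∈ s ↔ y ∈ s := by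
    intro i y
    constructor
    · intro h
      have : y ∈ G^[i] ⁻¹' s := h
      rwa [hs_iter i] at this
    · intro h
      have : y ∈ G^[i] ⁻¹' s := by rw [hs_iter i]; exact h
      exact this
  have hpres_iter : ∀ i, MeasurePreserving G^[i] μ μ := fun i => hpres.iterate i
  -- the key identity: ∫_s φ dμ = μ(s) ∫ φ dμ for all bounded continuous φ
  have hkey : ∀ f : Q →ᵇ ℝ,
      ∫ y, s.indicator ⇑f y ∂μ = (μ s).toReal * ∫ y, f y ∂μ := by
    intro f
    set c : ℝ := ∫ y, f y ∂μ with hc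
    set u : ℕ → ℝ := fun n => ∫ y, f y ∂(unifOrbit (X n)) with hu
    have hutend : Tendsto u atTop (𝓝 c) := hμtend f
    have habsf : ∀ y, |f y| ≤ ‖f‖ := fun y => f.norm_coe_le_norm y
    have hcle : |c| ≤ ‖f‖ := by
      refine le_of_tendsto (hutend.abs) (Eventually.of_forall fun n => ?_)
      exact abs_integral_unifOrbit_le f.continuous habsf (hcard n)
    -- Birkhoff-average functions
    have hAncont : ∀ n : ℕ, Continuous (fun x => ∫ y, f y ∂(nuMeas G (X n).card x)) := by
      intro n
      have e : (fun x => ∫ y, f y ∂(nuMeas G (X n).card x))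
          = fun x => (((X n).card : ℝ))⁻¹ * ∑ i ∈ Finset.range (X n).card, f (G^[i] x) :=
        funext fun x => integral_nuMeas ⇑f f.continuous G _ x
      rw [e]
      exact continuous_const.mul
        (continuous_finset_sum _ fun i _ => f.continuous.comp (hG.iterate i))
    set An : ℕ → Q →ᵇ ℝ := fun n => BoundedContinuousFunction.mkOfCompact
      ⟨fun x => ∫ y, f y ∂(nuMeas G (X n).card x), hAncont n⟩ with hAn
    have hAn_apply : ∀ n x, An n x = ∫ y, f y ∂(nuMeas G (X n).card x) := fun n x => rfl
    -- step A : ∫_s An dμ = ∫_s f dμ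
    have hcomp_ind : ∀ (i : ℕ),
        ∫ y, s.indicator ⇑f (G^[i] y) ∂μ = ∫ y, s.indicator ⇑f y ∂μ := by
      intro i
      have hGi : Measurable G^[i] := hG.measurable.iterate i
      have hsm : AEStronglyMeasurable (s.indicator ⇑f) (μ.map G^[i]) :=
        (f.continuous.measurable.indicator hs).aestronglyMeasurable
      calc ∫ y, s.indicator ⇑f (G^[i] y) ∂μ
          = ∫ y, s.indicator ⇑f y ∂(μ.map G^[i]) := (integral_map hGi.aemeasurable hsm).symm
        _ = ∫ y, s.indicator ⇑f y ∂μ := by rw [(hpres_iter i).map_eq]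
    have hind_int_iter : ∀ i : ℕ,
        Integrable (s.indicator (fun z => f (G^[i] z))) μ := by
      intro i
      exact ((f.compContinuous (⟨G^[i], hG.iterate i⟩ : C(Q, Q))).integrable μ).indicator hs
    have stepA : ∀ n : ℕ, ∫ y, s.indicator ⇑(An n) y ∂μ = ∫ y, s.indicator ⇑f y ∂μ := by
      intro n
      have hkpos := hcard n
      have hk0 : (((X n).card : ℝ)) ≠ 0 := by exact_mod_cast hkpos.ne'
      have e1 : s.indicator ⇑(An n) = fun y => (((X n).card:ℝ))⁻¹ *
          ∑ i ∈ Finset.range (X n).card, s.indicator (fun z => f (G^[i] z)) y := by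
        funext y
        by_cases hy : y ∈ s
        · rw [Set.indicator_of_mem hy]
          rw [hAn_apply n y, integral_nuMeas ⇑f f.continuous]
          congr 1
          exact Finset.sum_congr rfl fun i _ => (Set.indicator_of_mem hy (fun z => f (G^[i] z))).symm
        · rw [Set.indicator_of_notMem hy]
          have : ∀ i ∈ Finset.range (X n).card,
              s.indicator (fun z => f (G^[i] z)) y = 0 :=
            fun i _ => Set.indicator_of_notMem hy _
          rw [Finset.sum_congr rfl this]
          simp
      rw [e1]
      have e2 : ∀ i : ℕ, s.indicator (fun z => f (G^[i] z))
          = fun y => s.indicator ⇑f (G^[i] y) := by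
        intro i
        funext y
        by_cases hy : y ∈ s
        · rw [Set.indicator_of_mem hy, Set.indicator_of_mem ((hmem_iter i y).2 hy)]
        · rw [Set.indicator_of_notMem hy,
            Set.indicator_of_notMem (fun h => hy ((hmem_iter i y).1 h))]
      calc ∫ y, (((X n).card:ℝ))⁻¹ *
            ∑ i ∈ Finset.range (X n).card, s.indicator (fun z => f (G^[i] z)) y ∂μ
          = (((X n).card:ℝ))⁻¹ * ∫ y,
            ∑ i ∈ Finset.range (X n).card, s.indicator (fun z => f (G^[i] z)) y ∂μ :=
            integral_const_mul _ _
        _ = (((X n).card:ℝ))⁻¹ * ∑ i ∈ Finset.range (X n).card,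
            ∫ y, s.indicator (fun z => f (G^[i] z)) y ∂μ := by
            rw [integral_finset_sum _ (fun i _ => hind_int_iter i)]
        _ = (((X n).card:ℝ))⁻¹ * ∑ i ∈ Finset.range (X n).card,
            ∫ y, s.indicator ⇑f y ∂μ := by
            congr 1
            refine Finset.sum_congr rfl fun i _ => ?_
            rw [e2 i]
            exact hcomp_ind i
        _ = ∫ y, s.indicator ⇑f y ∂μ := by
            rw [Finset.sum_const, Finset.card_range, nsmul_eq_mul, ← mul_assoc,
              inv_mul_cancel₀ hk0, one_mul]
    -- step B : the distance is bounded by ∫ |An - c| dμ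
    set Dn : ℕ → Q →ᵇ ℝ := fun n => BoundedContinuousFunction.mkOfCompact
      ⟨fun y => |An n y - c|, (continuous_abs.comp ((An n).continuous.sub continuous_const))⟩
      with hDn
    have stepB : ∀ n : ℕ, |∫ y, s.indicator ⇑f y ∂μ - (μ s).toReal * c|
        ≤ ∫ y, Dn n y ∂μ := by
      intro n
      rw [← stepA n]
      have e3 : ∫ y, s.indicator ⇑(An n) y ∂μ - (μ s).toReal * c
          = ∫ y, s.indicator (fun z => An n z - c) y ∂μ := by
        have e4 : s.indicator (fun z => An n z - c)
            = fun y => s.indicator ⇑(An n) y - s.indicator (fun _ => c) y := by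
          funext y
          by_cases hy : y ∈ s
          · simp [Set.indicator_of_mem hy]
          · simp [Set.indicator_of_notMem hy]
        rw [e4, integral_sub (((An n).integrable μ).indicator hs)
          ((integrable_const c).indicator hs), integral_indicator_const _ hs, smul_eq_mul]
        rfl
      rw [e3]
      have h5 : |∫ y, s.indicator (fun z => An n z - c) y ∂μ|
          ≤ ∫ y, |s.indicator (fun z => An n z - c) y| ∂μ := by
        simpa [Real.norm_eq_abs] using
          norm_integral_le_integral_norm (μ := μ) (s.indicator (fun z => An n z - c))
      refine h5.trans ?_
      refine integral_mono ((((An n).integrable μ).sub (integrable_const c)).indicator hs).abs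
        ((Dn n).integrable μ) ?_
      intro y
      show |s.indicator (fun z => An n z - c) y| ≤ Dn n y
      by_cases hy : y ∈ s
      · rw [Set.indicator_of_mem hy]
        exact le_refl _
      · rw [Set.indicator_of_notMem hy]
        simp only [abs_zero]
        exact abs_nonneg _
    -- step C : ∫ |An - c| dμ can be made arbitrarily small
    have stepC : ∀ ε : ℝ, 0 < ε → ∃ n, ∫ y, Dn n y ∂μ ≤ ε := by
      intro ε hε
      have hBf : (0:ℝ) ≤ ‖f‖ := norm_nonneg f
      set ε₁ : ℝ := ε / (4 * (1 + ‖f‖)) with hε₁def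
      have hε₁ : 0 < ε₁ := by positivity
      obtain ⟨Xt, hXtsub, hH⟩ := H ε₁ hε₁
      obtain ⟨N, hN⟩ := hH ⟨⇑f, f.continuous⟩
      obtain ⟨N₂, hN₂⟩ := (Metric.tendsto_atTop.1 hutend) ε₁ hε₁
      set n := max (N + 1) N₂ with hn
      refine ⟨n, ?_⟩
      have hNn : N < n := lt_of_lt_of_le (Nat.lt_succ_self N) (le_max_left _ _)
      have hucn : |u n - c| ≤ ε₁ := by
        have := hN₂ n (le_max_right _ _)
        rw [Real.dist_eq] at this
        exact this.le
      have hbound : ∀ m, n < m → ∫ y, Dn n y ∂(unifOrbit (X m)) ≤ 2 * ε₁ + ε₁ * (2 * ‖f‖) := by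
        intro m hm
        obtain ⟨hratio, hnear⟩ := hN m (lt_trans hNn hm)
        rw [integral_unifOrbit ⇑(Dn n) (Dn n).continuous]
        have hBd : ∀ x ∈ X m, |An n x - c| ≤ 2 * ‖f‖ := by
          intro x _
          have h1 : |An n x| ≤ ‖f‖ := abs_integral_nuMeas_le f.continuous habsf (hcard n) x
          have h3 := abs_add_le (An n x) (-c)
          rw [abs_neg] at h3
          rw [sub_eq_add_neg]
          linarith
        have hAt : ∀ x ∈ Xt m, |An n x - c| ≤ 2 * ε₁ := by
          intro x hx
          have h1 : |An n x - u n| ≤ ε₁ := by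
            rw [hAn_apply n x]
            exact (hnear n (by omega) hm x hx).le
          have h2 := abs_add_le (An n x - u n) (u n - c)
          have h3 : An n x - c = (An n x - u n) + (u n - c) := by ring
          rw [← h3] at h2
          exact h2.trans (by linarith)
        have := avg_abs_est (hXtsub m) (hcard m) (fun x => An n x) c (2 * ‖f‖) ε₁ (2 * ε₁)
          (by positivity) (by positivity) hBd hratio hAt
        exact this
      have hlim : Tendsto (fun m => ∫ y, Dn n y ∂(unifOrbit (X m))) atTop
          (𝓝 (∫ y, Dn n y ∂μ)) := hμtend (Dn n)
      have h6 : ∫ y, Dn n y ∂μ ≤ 2 * ε₁ + ε₁ * (2 * ‖f‖) := by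
        refine le_of_tendsto hlim ?_
        filter_upwards [eventually_gt_atTop n] with m hm
        exact hbound m hm
      have h7 : 2 * ε₁ + ε₁ * (2 * ‖f‖) ≤ ε := by
        have h8 : ε₁ * (4 * (1 + ‖f‖)) = ε := div_mul_cancel₀ ε (by positivity)
        nlinarith
      exact h6.trans h7
    -- combine
    have hzero : |∫ y, s.indicator ⇑f y ∂μ - (μ s).toReal * c| = 0 := by
      by_contra hne
      have hpos : 0 < |∫ y, s.indicator ⇑f y ∂μ - (μ s).toReal * c| :=
        lt_of_le_of_ne (abs_nonneg _) (Ne.symm hne)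
      obtain ⟨n, hn⟩ := stepC (|∫ y, s.indicator ⇑f y ∂μ - (μ s).toReal * c| / 2) (by linarith)
      have := stepB n
      linarith
    have := abs_eq_zero.1 hzero
    linarith [sub_eq_zero.1 this]
  -- conclude: μ.restrict s = μ s • μ
  haveI : IsFiniteMeasure ((μ s) • μ) := by
    constructor
    rw [Measure.smul_apply, smul_eq_mul]
    exact ENNReal.mul_lt_top (measure_lt_top μ s) (measure_lt_top μ univ)
  have hres : μ.restrict s = (μ s) • μ := by
    apply ext_of_forall_lintegral_eq_of_IsFiniteMeasure
    intro f
    rw [lintegral_smul_measure]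
    have hint_res : Integrable (fun x => ((f x : ℝ))) (μ.restrict s) :=
      (toRealBCF f).integrable _
    rw [lintegral_coe_eq_integral _ hint_res,
      lintegral_coe_eq_integral _ ((toRealBCF f).integrable μ)]
    have e9 : ∫ x, ((f x : ℝ)) ∂(μ.restrict s) = ∫ y, s.indicator ⇑(toRealBCF f) y ∂μ := by
      rw [integral_indicator hs]
      rfl
    rw [e9, hkey (toRealBCF f)]
    rw [ENNReal.ofReal_mul ENNReal.toReal_nonneg, ENNReal.ofReal_toReal (measure_ne_top μ s)]
    rfl
  have hss : μ s = μ s * μ s := by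
    have h1 : μ.restrict s s = ((μ s) • μ) s := by rw [hres]
    rw [Measure.restrict_apply hs, Set.inter_self, Measure.smul_apply, smul_eq_mul] at h1
    exact h1
  rw [Filter.eventuallyConst_set']
  rcases eq_or_ne (μ s) 0 with h0 | h0
  · left
    exact ae_eq_empty.2 h0
  · right
    have h1 : μ s = 1 := by
      have hne : μ s ≠ ⊤ := measure_ne_top μ s
      have h2 : μ s * 1 = μ s * μ s := by rw [mul_one]; exact hss
      exact ((ENNReal.mul_right_inj h0 hne).1 h2).symm
    refine (ae_eq_univ_iff_measure_eq hs.nullMeasurableSet).2 ?_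
    rw [h1, measure_univ]
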